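/- In any tree T of order n ≥ 3, the sum of normalities Norm(T) = Σ_{v∈V(T)} norm(v) satisfies Norm(T) ≥ 1, with equality if and only if T is the star S_n. -/

import Mathlib

open Finset

variable {V : Type*}

/-- Eccentricity: the maximum distance from `v` to any vertex. -/
noncomputable def ecc (G : SimpleGraph V) [Fintype V] (v : V) : ℕ :=
  Finset.univ.sup fun u => G.dist v u

/-- Diameter: the maximum eccentricity. -/
noncomputable def gdiam (G : SimpleGraph V) [Fintype V] : ℕ :=
  Finset.univ.sup fun v => ecc G v

/-- A vertex is peripheral if its eccentricity equals the diameter. -/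
noncomputable def peripheral (G : SimpleGraph V) [Fintype V] (v : V) : Prop :=
  ecc G v = gdiam G

/-- Normality: the minimum distance from `v` to a peripheral vertex. -/
noncomputable def gnorm (G : SimpleGraph V) [Fintype V] (v : V) : ℕ :=
  sInf {n | ∃ u, peripheral G u ∧ G.dist v u = n}

/-- The sum of normalities. -/
noncomputable def NormSum (G : SimpleGraph V) [Fintype V] : ℕ :=
  ∑ v, gnorm G v

/-- λ(v) = ecc(v) − norm(v). -/
noncomputable def lam (G : SimpleGraph V) [Fintype V] (v : V) : ℕ :=
  ecc G v - gnorm G v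

/-- Λ(T) = Σ_v λ(v). -/
noncomputable def LamSum (G : SimpleGraph V) [Fintype V] : ℕ :=
  ∑ v, lam G v

/-- `G` is a star: there is a center adjacent to exactly the other vertices,
with no other edges. -/
def IsStar (G : SimpleGraph V) : Prop :=
  ∃ c : V, ∀ u v : V, G.Adj u v ↔ (u = c ∧ v ≠ c) ∨ (v = c ∧ u ≠ c)

section Aux
variable [Fintype V] {G : SimpleGraph V}

lemma dist_le_ecc (v u : V) : G.dist v u ≤ ecc G v := Finset.le_sup (mem_univ u)

lemma ecc_le_gdiam (v : V) : ecc G v ≤ gdiam G := Finset.le_sup (mem_univ v)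

lemma exists_ecc [Nonempty V] (v : V) : ∃ u, G.dist v u = ecc G v := by
  obtain ⟨u, -, hu⟩ := Finset.exists_mem_eq_sup univ univ_nonempty (fun u => G.dist v u)
  exact ⟨u, hu.symm⟩

lemma exists_peripheral [Nonempty V] (G : SimpleGraph V) : ∃ v, peripheral G v := by
  obtain ⟨v, -, hv⟩ := Finset.exists_mem_eq_sup univ univ_nonempty (fun v => ecc G v)
  exact ⟨v, hv.symm⟩

lemma gnorm_eq_zero_iff [Nonempty V] (hc : G.Connected) (v : V) :
    gnorm G v = 0 ↔ peripheral G v := by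
  unfold gnorm
  rw [Nat.sInf_eq_zero]
  constructor
  · rintro (⟨u, hu, hd⟩ | hS)
    · rwa [hc.dist_eq_zero_iff.mp hd]
    · exfalso
      obtain ⟨w, hw⟩ := exists_peripheral G
      exact (Set.eq_empty_iff_forall_notMem.mp hS) _ ⟨w, hw, rfl⟩
  · intro h
    exact Or.inl ⟨v, h, SimpleGraph.dist_self⟩

/-- In a tree, if `a` is a neighbor of `v` that is not farther from `u`, then `a` is the
second vertex of the unique path from `v` to `u`. -/
lemma key (hT : G.IsTree) {v a u : V} (hva : G.Adj v a)
    (hle : G.dist a u ≤ G.dist v u) (hd : 1 ≤ G.dist v u) :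
    ∃ p : G.Walk v u, p.IsPath ∧ p.getVert 1 = a := by
  classical
  have hconn := hT.isConnected
  obtain ⟨q, hq, hql⟩ := hconn.exists_path_of_dist a u
  by_cases hv : v ∈ q.support
  · exfalso
    have h1 : G.dist a v ≤ (q.takeUntil v hv).length := SimpleGraph.dist_le _
    have h2 : G.dist v u ≤ (q.dropUntil v hv).length := SimpleGraph.dist_le _
    have hav : G.dist a v = 1 := SimpleGraph.dist_eq_one_iff_adj.mpr hva.symm
    have hsplit := congrArg SimpleGraph.Walk.length (q.take_spec hv)
    rw [SimpleGraph.Walk.length_append] at hsplit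
    omega
  · refine ⟨SimpleGraph.Walk.cons hva q, hq.cons hv, ?_⟩
    simp [SimpleGraph.Walk.getVert_cons_succ]

lemma periph_nbr [Nonempty V] (hT : G.IsTree) (hdiam : 1 ≤ gdiam G) {v a b : V}
    (hv : peripheral G v) (ha : G.Adj v a) (hb : G.Adj v b) : a = b := by
  obtain ⟨u, hu⟩ := exists_ecc (G := G) v
  have hd : G.dist v u = gdiam G := hu.trans hv
  have hda : G.dist a u ≤ G.dist v u :=
    le_trans (le_trans (dist_le_ecc a u) (ecc_le_gdiam a)) hd.ge
  have hdb : G.dist b u ≤ G.dist v u :=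
    le_trans (le_trans (dist_le_ecc b u) (ecc_le_gdiam b)) hd.ge
  obtain ⟨p, hp, hpa⟩ := key hT ha hda (hd ▸ hdiam)
  obtain ⟨p', hp', hpb⟩ := key hT hb hdb (hd ▸ hdiam)
  have hpp : p = p' := (hT.existsUnique_path v u).unique hp hp'
  rw [← hpa, ← hpb, hpp]

lemma exists_third (hn : 3 ≤ Fintype.card V) (a b : V) : ∃ z, z ≠ a ∧ z ≠ b := by
  classical
  by_contra h
  push_neg at h
  have hsub : (Finset.univ : Finset V) ⊆ {a, b} := by
    intro z _
    rcases eq_or_ne z a with h' | h'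
    · simp [h']
    · simp [h z h']
  have := Finset.card_le_card hsub
  have h2 : ({a, b} : Finset V).card ≤ 2 :=
    le_trans (Finset.card_insert_le _ _) (by simp)
  rw [Finset.card_univ] at this
  omega

lemma two_le_gdiam (hT : G.IsTree) (hn : 3 ≤ Fintype.card V) : 2 ≤ gdiam G := by
  by_contra h
  push_neg at h
  have hadj : ∀ x y : V, x ≠ y → G.Adj x y := by
    intro x y hxy
    have h1 : G.dist x y ≤ 1 :=
      le_trans (le_trans (dist_le_ecc x y) (ecc_le_gdiam x)) (by omega)
    have h0 : 0 < G.dist x y := hT.isConnected.pos_dist_of_ne hxy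
    exact SimpleGraph.dist_eq_one_iff_adj.mp (by omega)
  have h1 : (1 : ℕ) < Fintype.card V := by omega
  obtain ⟨x, y, hxy⟩ := Fintype.exists_pair_of_one_lt_card h1
  obtain ⟨z, hzx, hzy⟩ := exists_third hn x y
  have p1 : G.Walk x y := SimpleGraph.Walk.cons (hadj x y hxy) SimpleGraph.Walk.nil
  have hp1 : (SimpleGraph.Walk.cons (hadj x y hxy) SimpleGraph.Walk.nil).IsPath := by
    simp [SimpleGraph.Walk.isPath_def, hxy]
  have hp2 : (SimpleGraph.Walk.cons (hadj x z hzx.symm)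
      (SimpleGraph.Walk.cons (hadj z y hzy) SimpleGraph.Walk.nil)).IsPath := by
    simp [SimpleGraph.Walk.isPath_def, hxy, hzx.symm, hzy, hzx, Ne.symm hzx, Ne.symm hzy]
  have := (hT.existsUnique_path x y).unique hp1 hp2
  have hlen := congrArg SimpleGraph.Walk.length this
  simp at hlen

lemma mid_ne {m w x u : V} (ha : G.Adj m w) (hb : G.Adj w x) (q : G.Walk x u)
    (hp : (SimpleGraph.Walk.cons ha (SimpleGraph.Walk.cons hb q)).IsPath) : m ≠ x := by
  have hv2 : m ∉ (SimpleGraph.Walk.cons hb q).support :=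
    ((SimpleGraph.Walk.cons_isPath_iff _ _).mp hp).2
  have hx : x ∈ (SimpleGraph.Walk.cons hb q).support := by
    rw [SimpleGraph.Walk.support_cons]
    exact List.mem_cons_of_mem _ q.start_mem_support
  exact fun h => hv2 (h ▸ hx)

lemma exists_two_nbrs (hT : G.IsTree) (hn : 3 ≤ Fintype.card V) :
    ∃ m a b : V, a ≠ b ∧ G.Adj m a ∧ G.Adj m b := by
  have : Nonempty V := Fintype.card_pos_iff.mp (by omega)
  obtain ⟨v, hv⟩ := exists_peripheral G
  obtain ⟨u, hu⟩ := exists_ecc (G := G) v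
  have hd : G.dist v u = gdiam G := hu.trans hv
  have h2 : 2 ≤ G.dist v u := hd ▸ two_le_gdiam hT hn
  obtain ⟨p, hp, hpl⟩ := hT.isConnected.exists_path_of_dist v u
  match p, hp, hpl with
  | .nil, hp, hpl => simp at h2
  | .cons h1 .nil, hp, hpl => simp at hpl; omega
  | .cons h1 (.cons h2' q), hp, hpl =>
    refine ⟨_, v, _, ?_, h1.symm, h2'⟩
    exact mid_ne h1 h2' q hp

lemma adj_center [Nonempty V] (hT : G.IsTree) (hdiam : 1 ≤ gdiam G) {m u : V}
    (hper : ∀ v, v ≠ m → peripheral G v) (hu : u ≠ m) : G.Adj m u := by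
  have hd0 : 0 < G.dist m u := hT.isConnected.pos_dist_of_ne (Ne.symm hu)
  rcases eq_or_lt_of_le (Nat.succ_le_of_lt hd0) with h1 | h1
  · exact SimpleGraph.dist_eq_one_iff_adj.mp h1.symm
  · exfalso
    obtain ⟨p, hp, hpl⟩ := hT.isConnected.exists_path_of_dist m u
    match p, hp, hpl with
    | .nil, hp, hpl => simp at h1
    | .cons ha .nil, hp, hpl => simp at hpl; omega
    | .cons ha (.cons hb q), hp, hpl =>
      have hwper := hper _ (G.ne_of_adj ha).symm
      have heq := periph_nbr hT hdiam hwper ha.symm hb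
      exact (mid_ne ha hb q hp) heq

end Aux

section Aux2
variable [Fintype V] {G : SimpleGraph V}

lemma star_normsum (hn : 3 ≤ Fintype.card V) {c : V}
    (hc : ∀ u v : V, G.Adj u v ↔ (u = c ∧ v ≠ c) ∨ (v = c ∧ u ≠ c)) :
    NormSum G = 1 := by
  have hne : Nonempty V := Fintype.card_pos_iff.mp (by omega)
  have hadj : ∀ u : V, u ≠ c → G.Adj c u := fun u hu => (hc c u).mpr (Or.inl ⟨rfl, hu⟩)
  have hnadj : ∀ u v : V, u ≠ c → v ≠ c → ¬ G.Adj u v := by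
    intro u v hu hv h
    rcases (hc u v).mp h with ⟨h1, _⟩ | ⟨h1, _⟩
    · exact hu h1
    · exact hv h1
  have hd1 : ∀ u : V, u ≠ c → G.dist c u = 1 := fun u hu =>
    SimpleGraph.dist_eq_one_iff_adj.mpr (hadj u hu)
  have hd2 : ∀ u v : V, u ≠ c → v ≠ c → u ≠ v → G.dist u v = 2 := by
    intro u v hu hv huv
    have hle : G.dist u v ≤ 2 := by
      simpa using SimpleGraph.dist_le
        (SimpleGraph.Walk.cons (hadj u hu).symm
          (SimpleGraph.Walk.cons (hadj v hv) SimpleGraph.Walk.nil))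
    have h0 : G.dist u v ≠ 0 :=
      SimpleGraph.dist_ne_zero_iff_ne_and_reachable.mpr ⟨huv,
        (SimpleGraph.Walk.cons (hadj u hu).symm
          (SimpleGraph.Walk.cons (hadj v hv) SimpleGraph.Walk.nil)).reachable⟩
    have h1 : G.dist u v ≠ 1 := fun h =>
      hnadj u v hu hv (SimpleGraph.dist_eq_one_iff_adj.mp h)
    omega
  obtain ⟨u0, hu0⟩ := Fintype.exists_ne_of_one_lt_card (by omega) c
  have hecc_c : ecc G c = 1 := by
    apply le_antisymm
    · apply Finset.sup_le
      intro x _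
      rcases eq_or_ne x c with h | h
      · simp [h, SimpleGraph.dist_self]
      · exact (hd1 x h).le
    · exact (hd1 u0 hu0) ▸ Finset.le_sup (mem_univ u0)
  have hecc : ∀ u : V, u ≠ c → ecc G u = 2 := by
    intro u hu
    obtain ⟨z, hzu, hzc⟩ := exists_third hn u c
    apply le_antisymm
    · apply Finset.sup_le
      intro x _
      rcases eq_or_ne x c with h | h
      · subst h
        rw [G.dist_comm]
        exact (hd1 u hu).le.trans one_le_two
      · rcases eq_or_ne u x with h' | h'
        · simp [← h', SimpleGraph.dist_self]
        · exact (hd2 u x hu h h').le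
    · exact (hd2 u z hu hzc (Ne.symm hzu)) ▸ Finset.le_sup (mem_univ z)
  have hgdiam : gdiam G = 2 := by
    apply le_antisymm
    · apply Finset.sup_le
      intro x _
      rcases eq_or_ne x c with h | h
      · simp [h, hecc_c]
      · exact (hecc x h).le
    · exact (hecc u0 hu0) ▸ Finset.le_sup (mem_univ u0)
  have hper : ∀ x : V, peripheral G x ↔ x ≠ c := by
    intro x
    unfold peripheral
    rw [hgdiam]
    constructor
    · intro h hxc
      rw [hxc, hecc_c] at h
      omega
    · intro h
      exact hecc x h
  have hgn0 : ∀ x : V, x ≠ c → gnorm G x = 0 := by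
    intro x hx
    exact Nat.sInf_eq_zero.mpr (Or.inl ⟨x, (hper x).mpr hx, SimpleGraph.dist_self⟩)
  have hgnc : gnorm G c = 1 := by
    apply le_antisymm
    · exact Nat.sInf_le ⟨u0, (hper u0).mpr hu0, hd1 u0 hu0⟩
    · rw [Nat.one_le_iff_ne_zero]
      intro h
      rcases Nat.sInf_eq_zero.mp h with ⟨u, hu, hdu⟩ | hemp
      · have huc : u ≠ c := (hper u).mp hu
        have := hd1 u huc
        omega
      · exact Set.eq_empty_iff_forall_notMem.mp hemp _ ⟨u0, (hper u0).mpr hu0, hd1 u0 hu0⟩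
  calc NormSum G = gnorm G c := Finset.sum_eq_single_of_mem c (mem_univ c)
        (fun b _ hb => hgn0 b hb)
    _ = 1 := hgnc

end Aux2

theorem stmt_2 [Fintype V] (G : SimpleGraph V) (hT : G.IsTree)
    (hn : 3 ≤ Fintype.card V) :
    1 ≤ NormSum G ∧ (NormSum G = 1 ↔ IsStar G) := by
  classical
  have hnonempty : Nonempty V := Fintype.card_pos_iff.mp (by omega)
  have hconn := hT.isConnected
  have h2 := two_le_gdiam hT hn
  obtain ⟨m, a, b, hab, hma, hmb⟩ := exists_two_nbrs hT hn
  have hmper : ¬ peripheral G m := fun h => hab (periph_nbr hT (by omega) h hma hmb)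
  have hm1 : 1 ≤ gnorm G m := by
    rcases Nat.eq_zero_or_pos (gnorm G m) with h | h
    · exact absurd ((gnorm_eq_zero_iff hconn m).mp h) hmper
    · omega
  have hge : 1 ≤ NormSum G :=
    le_trans hm1 (Finset.single_le_sum (f := fun v => gnorm G v)
      (fun i _ => Nat.zero_le _) (mem_univ m))
  refine ⟨hge, ?_, ?_⟩
  · intro h1
    have hall : ∀ v, v ≠ m → peripheral G v := by
      intro v hv
      rw [← gnorm_eq_zero_iff hconn]
      by_contra h0
      have hv1 : 1 ≤ gnorm G v := Nat.pos_of_ne_zero h0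
      have hsum : gnorm G m + gnorm G v ≤ NormSum G := by
        have hsub : ({m, v} : Finset V) ⊆ univ := fun x _ => mem_univ x
        have := Finset.sum_le_sum_of_subset (f := fun x => gnorm G x) hsub
        rwa [Finset.sum_pair (Ne.symm hv)] at this
      omega
    refine ⟨m, ?_⟩
    intro u v
    constructor
    · intro huv
      rcases eq_or_ne u m with hu | hu
      · exact Or.inl ⟨hu, fun hv => (G.ne_of_adj huv) (hu.trans hv.symm)⟩
      · rcases eq_or_ne v m with hv | hv
        · exact Or.inr ⟨hv, hu⟩
        · exfalso
          have hum : G.Adj m u := adj_center hT (by omega) hall hu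
          exact hv (periph_nbr hT (by omega) (hall u hu) huv hum.symm)
    · rintro (⟨hu, hv⟩ | ⟨hv, hu⟩)
      · subst hu
        exact adj_center hT (by omega) hall hv
      · subst hv
        exact (adj_center hT (by omega) hall hu).symm
  · rintro ⟨c, hc⟩
    exact star_normsum hn hc
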